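/- Under the principal alignment setup, if some principal angle θ_i > π/4, then there exists a tangent direction Δ with X_p^T Δ = 0 and ‖Δ‖_F = 1 such that the Hessian quadratic form equals ξ_i (cos²(θ_i) − sin²(θ_i)) < 0, where ξ_i = Ξ_{i,i} ≥ σ_min² > 0. In particular the Hessian of f is not positive semidefinite at X_p. -/
import Mathlib


open Matrix Real

section Aux

variable {r : ℕ}

lemma diag_mul_sbm (d : Fin r → ℝ) (i j : Fin r) (c : ℝ) :
    Matrix.diagonal d * Matrix.single i j c = Matrix.single i j (d i * c) := by
  ext a b
  rw [Matrix.diagonal_mul]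
  by_cases h : i = a ∧ j = b
  · obtain ⟨rfl, rfl⟩ := h; simp
  · rw [Matrix.single_apply_of_ne _ _ _ _ _ h,
      Matrix.single_apply_of_ne _ _ _ _ _ h, mul_zero]

lemma sbm_mul_diag (d : Fin r → ℝ) (i j : Fin r) (c : ℝ) :
    Matrix.single i j c * Matrix.diagonal d = Matrix.single i j (c * d j) := by
  ext a b
  rw [Matrix.mul_diagonal]
  by_cases h : i = a ∧ j = b
  · obtain ⟨rfl, rfl⟩ := h; simp
  · rw [Matrix.single_apply_of_ne _ _ _ _ _ h,
      Matrix.single_apply_of_ne _ _ _ _ _ h, zero_mul]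

lemma trace_sbm_mul (i j : Fin r) (c : ℝ) (M : Matrix (Fin r) (Fin r) ℝ) :
    Matrix.trace (Matrix.single i j c * M) = c * M j i := by
  rw [Matrix.trace]
  rw [Finset.sum_eq_single i]
  · simp [Matrix.diag]
  · intro k _ hk
    simp [Matrix.diag, hk]
  · simp

lemma sbm_transpose (i : Fin r) (c : ℝ) :
    (Matrix.single i i c)ᵀ = Matrix.single i i c := by
  ext a b
  rw [Matrix.transpose_apply]
  by_cases ha : i = a <;> by_cases hb : i = b
  · subst ha; subst hb; rfl
  · rw [Matrix.single_apply_of_ne _ _ _ _ _ (fun h => hb h.1),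
      Matrix.single_apply_of_ne _ _ _ _ _ (fun h => hb h.2)]
  · rw [Matrix.single_apply_of_ne _ _ _ _ _ (fun h => ha h.2),
      Matrix.single_apply_of_ne _ _ _ _ _ (fun h => ha h.1)]
  · rw [Matrix.single_apply_of_ne _ _ _ _ _ (fun h => ha h.2),
      Matrix.single_apply_of_ne _ _ _ _ _ (fun h => ha h.1)]

end Aux

/-- under the principal alignment setup, if some principal angle
`θ i0 > π/4`, then there is a unit-Frobenius-norm tangent direction `Δ` on which the
Hessian quadratic form equals `ξ_{i0}(cos²θ_{i0} − sin²θ_{i0}) < 0`; in particular the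
Hessian is not positive semidefinite at `Xp`. -/
theorem hessian_escaping_direction {m n r : ℕ}
    (U : Matrix (Fin m) (Fin r) ℝ) (V : Matrix (Fin n) (Fin r) ℝ) (σ : Fin r → ℝ)
    (hU : Uᵀ * U = 1) (hV : Vᵀ * V = 1)
    (σmin : ℝ) (hσmin : 0 < σmin) (hσ : ∀ i, σmin ≤ σ i)
    (M : Matrix (Fin m) (Fin n) ℝ) (hM : M = U * Matrix.diagonal σ * Vᵀ)
    (Q : Matrix (Fin r) (Fin r) ℝ) (hQ : Qᵀ * Q = 1)
    (Xp Δp : Matrix (Fin m) (Fin r) ℝ) (hXp : Xpᵀ * Xp = 1)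
    (θ : Fin r → ℝ) (hθ : ∀ i, θ i ∈ Set.Icc 0 (π / 2))
    (hcos : Xpᵀ * (U * Q) = Matrix.diagonal (fun i => Real.cos (θ i)))
    (hΔp : Δpᵀ * Δp = 1) (hXΔp : Xpᵀ * Δp = 0)
    (hΔsin : Δp * Matrix.diagonal (fun i => Real.sin (θ i)) =
      ((1 : Matrix (Fin m) (Fin m) ℝ) - Xp * Xpᵀ) * (U * Q))
    (Ξ : Matrix (Fin r) (Fin r) ℝ)
    (hΞ : Ξ = Qᵀ * (Matrix.diagonal σ * Matrix.diagonal σ) * Q)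
    (i0 : Fin r) (hi0 : π / 4 < θ i0) :
    ∃ Δ : Matrix (Fin m) (Fin r) ℝ,
      Xpᵀ * Δ = 0 ∧ Matrix.trace (Δᵀ * Δ) = 1 ∧
      (Matrix.trace
          (Matrix.diagonal (fun i => Real.cos (θ i)) * (Δᵀ * Δ) *
            Matrix.diagonal (fun i => Real.cos (θ i)) * Ξ) -
        Matrix.trace
          (Matrix.diagonal (fun i => Real.sin (θ i)) * (Δpᵀ * Δ) * (Δᵀ * Δp) *
            Matrix.diagonal (fun i => Real.sin (θ i)) * Ξ)
        = Ξ i0 i0 * (Real.cos (θ i0) ^ 2 - Real.sin (θ i0) ^ 2)) ∧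
      (Matrix.trace
          (Matrix.diagonal (fun i => Real.cos (θ i)) * (Δᵀ * Δ) *
            Matrix.diagonal (fun i => Real.cos (θ i)) * Ξ) -
        Matrix.trace
          (Matrix.diagonal (fun i => Real.sin (θ i)) * (Δpᵀ * Δ) * (Δᵀ * Δp) *
            Matrix.diagonal (fun i => Real.sin (θ i)) * Ξ)
        < 0) := by
  set E : Matrix (Fin r) (Fin r) ℝ := Matrix.single i0 i0 (1 : ℝ) with hE
  refine ⟨Δp * E, ?_, ?_, ?_, ?_⟩
  case _ => rw [← Matrix.mul_assoc, hXΔp, Matrix.zero_mul]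
  all_goals
    have hΔTΔ : (Δp * E)ᵀ * (Δp * E) = E := by
      rw [Matrix.transpose_mul, Matrix.mul_assoc, ← Matrix.mul_assoc Δpᵀ, hΔp,
        Matrix.one_mul, hE, sbm_transpose, Matrix.single_mul_single_same, one_mul]
  case _ =>
    rw [hΔTΔ, hE]
    simp only [Matrix.trace, Matrix.diag]
    rw [Finset.sum_eq_single i0 (fun k _ hk => Matrix.single_apply_of_ne _ _ _ _ _ (fun h => hk h.1.symm)) (by simp)]
    simp
  all_goals
    have hpΔ : Δpᵀ * (Δp * E) = E := by rw [← Matrix.mul_assoc, hΔp, Matrix.one_mul]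
    have hΔpT : (Δp * E)ᵀ * Δp = E := by
      rw [Matrix.transpose_mul, Matrix.mul_assoc, hΔp, Matrix.mul_one, hE, sbm_transpose]
    have key : Matrix.trace
          (Matrix.diagonal (fun i => Real.cos (θ i)) * ((Δp * E)ᵀ * (Δp * E)) *
            Matrix.diagonal (fun i => Real.cos (θ i)) * Ξ) -
        Matrix.trace
          (Matrix.diagonal (fun i => Real.sin (θ i)) * (Δpᵀ * (Δp * E)) * ((Δp * E)ᵀ * Δp) *
            Matrix.diagonal (fun i => Real.sin (θ i)) * Ξ)
        = Ξ i0 i0 * (Real.cos (θ i0) ^ 2 - Real.sin (θ i0) ^ 2) := by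
      rw [hΔTΔ, hpΔ, hΔpT, hE, diag_mul_sbm, sbm_mul_diag, diag_mul_sbm,
        Matrix.single_mul_single_same, sbm_mul_diag, trace_sbm_mul, trace_sbm_mul]
      ring
  case _ => exact key
  case _ =>
    rw [key]
    have hθ0 := (hθ i0).1
    have hθ2 := (hθ i0).2
    have hπ : (0:ℝ) < π := Real.pi_pos
    -- cos θ i0 < sin θ i0
    have hcoslt : Real.cos (θ i0) < Real.cos (π / 4) := by
      apply Real.cos_lt_cos_of_nonneg_of_le_pi (by positivity) (by linarith) hi0
    have hsinge : Real.sin (π / 4) ≤ Real.sin (θ i0) := by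
      apply Real.sin_le_sin_of_le_of_le_pi_div_two (by linarith) hθ2 (le_of_lt hi0)
    have hcs : Real.cos (θ i0) < Real.sin (θ i0) := by
      rw [Real.cos_pi_div_four] at hcoslt
      rw [Real.sin_pi_div_four] at hsinge
      linarith
    have hcosnn : 0 ≤ Real.cos (θ i0) :=
      Real.cos_nonneg_of_mem_Icc ⟨by linarith, hθ2⟩
    have hsq : Real.cos (θ i0) ^ 2 < Real.sin (θ i0) ^ 2 :=
      pow_lt_pow_left₀ hcs hcosnn (by norm_num)
    -- Ξ i0 i0 > 0
    have hΞpos : 0 < Ξ i0 i0 := by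
      have hQ1 : (Qᵀ * Q) i0 i0 = 1 := by rw [hQ]; simp
      have hQsum : ∑ k, Q k i0 * Q k i0 = 1 := by
        rw [← hQ1, Matrix.mul_apply]; simp [Matrix.transpose_apply]
      have hΞval : Ξ i0 i0 = ∑ k, σ k * σ k * (Q k i0 * Q k i0) := by
        rw [hΞ, Matrix.diagonal_mul_diagonal, Matrix.mul_apply]
        congr 1; ext k
        rw [Matrix.mul_diagonal, Matrix.transpose_apply]; ring
      have hle : σmin * σmin * 1 ≤ ∑ k, σ k * σ k * (Q k i0 * Q k i0) := by
        rw [← hQsum, Finset.mul_sum]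
        apply Finset.sum_le_sum
        intro k _
        have h1 : σmin ≤ σ k := hσ k
        have h2 : 0 ≤ Q k i0 * Q k i0 := mul_self_nonneg _
        have : σmin * σmin ≤ σ k * σ k :=
          mul_le_mul h1 h1 (le_of_lt hσmin) (le_trans (le_of_lt hσmin) h1)
        nlinarith
      rw [hΞval]
      nlinarith
    nlinarith
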